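/- Let ε ∈ (0,1), δ ∈ (0,1), Δ > 0, and set σ = Δ · √(2 ln(1.25/δ)) / ε. Let a, b ∈ ℝ with |a − b| ≤ Δ. Then the one-dimensional Gaussian mechanism satisfies (ε, δ)-indistinguishability: for every Borel set S ⊆ ℝ, (N(a, σ²))(S) ≤ e^ε · (N(b, σ²))(S) + δ, where N(μ, σ²) denotes the Gaussian probability measure on ℝ with mean μ and variance σ². -/

import Mathlib

open MeasureTheory ProbabilityTheory Real Set

lemma std_symm (s : ℝ) : gaussianReal 0 1 (Set.Iio (-s)) = gaussianReal 0 1 (Set.Ioi s) := by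
  have hmap : (gaussianReal 0 1).map (fun x : ℝ => (-1) * x) = gaussianReal 0 1 := by
    rw [show (fun x : ℝ => (-1) * x) = ((-1 : ℝ) * ·) from rfl, gaussianReal_map_const_mul]
    norm_num
  conv_lhs => rw [← hmap]
  rw [Measure.map_apply (by fun_prop) measurableSet_Iio]
  congr 1
  ext x
  simp only [Set.mem_preimage, Set.mem_Iio, Set.mem_Ioi]
  constructor <;> intro h <;> nlinarith

lemma half0 : gaussianReal 0 1 (Set.Ici (0:ℝ)) = ENNReal.ofReal (1/2) := by
  set g := gaussianReal 0 1 with hg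
  have h0 : g {(0:ℝ)} = 0 :=
    gaussianReal_absolutelyContinuous 0 one_ne_zero (measure_singleton 0)
  have hIci : g (Set.Ioi (0:ℝ)) = g (Set.Ici 0) := measure_congr (Ioi_ae_eq_Ici' h0)
  have hsym : g (Set.Iio (0:ℝ)) = g (Set.Ici 0) := by
    have h := std_symm (0 : ℝ)
    rw [neg_zero] at h
    rw [h, hIci]
  have hsum : g (Set.Iio (0:ℝ)) + g (Set.Ici 0) = 1 := by
    rw [← measure_union (Set.Iio_disjoint_Ici le_rfl) measurableSet_Ici,
      Set.Iio_union_Ici, measure_univ]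
  rw [hsym] at hsum
  have h2 : 2 * g (Set.Ici (0:ℝ)) = 1 := by rw [two_mul]; exact hsum
  have : g (Set.Ici (0:ℝ)) = 2⁻¹ := by
    rw [← one_mul (g (Set.Ici (0:ℝ))), ← ENNReal.inv_mul_cancel (two_ne_zero) ENNReal.ofNat_ne_top,
      mul_assoc, h2, mul_one]
  rw [this]
  rw [ENNReal.ofReal_div_of_pos (by norm_num), ENNReal.ofReal_one, ENNReal.ofReal_ofNat, one_div]

lemma halfm (m : ℝ) : gaussianReal m 1 (Set.Ici m) = ENNReal.ofReal (1/2) := by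
  have hmap : (gaussianReal 0 1).map (· + m) = gaussianReal m 1 := by
    rw [gaussianReal_map_add_const, zero_add]
  rw [← hmap, Measure.map_apply (by fun_prop) measurableSet_Ici]
  rw [show (· + m) ⁻¹' Set.Ici m = Set.Ici (0:ℝ) by ext x; simp, half0]

lemma tail_T1 {t : ℝ} (ht : 0 ≤ t) :
    gaussianReal 0 1 (Set.Ici t) ≤ ENNReal.ofReal (Real.exp (-t^2/2) * (1/2)) := by
  rw [gaussianReal_apply 0 one_ne_zero]
  have hptwise : ∀ x ∈ Set.Ici t,
      gaussianPDF 0 1 x ≤ ENNReal.ofReal (Real.exp (-t^2/2)) * gaussianPDF t 1 x := by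
    intro x hx
    simp only [Set.mem_Ici] at hx
    rw [gaussianPDF, gaussianPDF, ← ENNReal.ofReal_mul (Real.exp_nonneg _)]
    apply ENNReal.ofReal_le_ofReal
    rw [gaussianPDFReal, gaussianPDFReal]
    push_cast
    have hexp : rexp (-(x - 0)^2/(2*1)) ≤ rexp (-(x - t)^2/(2*1)) * rexp (-t^2/2) := by
      rw [← Real.exp_add, Real.exp_le_exp]
      nlinarith [mul_nonneg ht (sub_nonneg.mpr hx)]
    calc (Real.sqrt (2*π*1))⁻¹ * rexp (-(x - 0)^2/(2*1))
        ≤ (Real.sqrt (2*π*1))⁻¹ * (rexp (-(x - t)^2/(2*1)) * rexp (-t^2/2)) :=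
          mul_le_mul_of_nonneg_left hexp (by positivity)
      _ = rexp (-t^2/2) * ((Real.sqrt (2*π*1))⁻¹ * rexp (-(x - t)^2/(2*1))) := by ring
  calc ∫⁻ x in Set.Ici t, gaussianPDF 0 1 x
      ≤ ∫⁻ x in Set.Ici t, ENNReal.ofReal (Real.exp (-t^2/2)) * gaussianPDF t 1 x :=
        setLIntegral_mono ((measurable_gaussianPDF t 1).const_mul _) hptwise
    _ = ENNReal.ofReal (Real.exp (-t^2/2)) * ∫⁻ x in Set.Ici t, gaussianPDF t 1 x := by
        rw [lintegral_const_mul _ (measurable_gaussianPDF t 1)]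
    _ = ENNReal.ofReal (Real.exp (-t^2/2)) * gaussianReal t 1 (Set.Ici t) := by
        rw [gaussianReal_apply t one_ne_zero]
    _ = ENNReal.ofReal (Real.exp (-t^2/2) * (1/2)) := by
        rw [halfm, ← ENNReal.ofReal_mul (Real.exp_nonneg _)]

lemma tail_T2 {t : ℝ} (ht : t ≤ 0) :
    gaussianReal 0 1 (Set.Ici t) ≤ ENNReal.ofReal (1/2 + (-t) * (Real.sqrt (2*π))⁻¹) := by
  have hsplit : Set.Ici t ⊆ Set.Ico t 0 ∪ Set.Ici (0:ℝ) := by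
    intro x hx
    rcases lt_or_ge x 0 with h | h
    · exact Or.inl ⟨hx, h⟩
    · exact Or.inr h
  calc gaussianReal 0 1 (Set.Ici t)
      ≤ gaussianReal 0 1 (Set.Ico t 0) + gaussianReal 0 1 (Set.Ici (0:ℝ)) :=
        le_trans (measure_mono hsplit) (measure_union_le _ _)
    _ ≤ ENNReal.ofReal ((-t) * (Real.sqrt (2*π))⁻¹) + ENNReal.ofReal (1/2) := by
        rw [half0]
        refine add_le_add ?_ le_rfl
        rw [gaussianReal_apply 0 one_ne_zero]
        calc ∫⁻ x in Set.Ico t 0, gaussianPDF 0 1 x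
            ≤ ∫⁻ _ in Set.Ico t 0, ENNReal.ofReal ((Real.sqrt (2*π))⁻¹) := by
              apply setLIntegral_mono (by fun_prop)
              intro x _
              rw [gaussianPDF]
              apply ENNReal.ofReal_le_ofReal
              rw [gaussianPDFReal]
              push_cast
              rw [mul_one]
              calc (Real.sqrt (2*π))⁻¹ * Real.exp (-(x-0)^2/(2*1))
                  ≤ (Real.sqrt (2*π))⁻¹ * 1 := by
                    apply mul_le_mul_of_nonneg_left _ (by positivity)
                    rw [Real.exp_le_one_iff]
                    nlinarith [sq_nonneg (x - 0)]
                _ = (Real.sqrt (2*π))⁻¹ := mul_one _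
          _ = ENNReal.ofReal ((Real.sqrt (2*π))⁻¹) * volume (Set.Ico t 0) := by
              rw [setLIntegral_const]
          _ = ENNReal.ofReal ((-t) * (Real.sqrt (2*π))⁻¹) := by
              rw [Real.volume_Ico, ← ENNReal.ofReal_mul (by positivity)]
              rw [mul_comm]
              norm_num
    _ = ENNReal.ofReal (1/2 + (-t) * (Real.sqrt (2*π))⁻¹) := by
        rw [← ENNReal.ofReal_add (mul_nonneg (neg_nonneg.mpr ht) (inv_nonneg.mpr (Real.sqrt_nonneg _))) (by norm_num), add_comm]

lemma gauss_map {σ : ℝ} (hσ : 0 < σ) (m : ℝ) :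
    (gaussianReal 0 1).map (fun x => σ * x + m) = gaussianReal m (Real.toNNReal (σ^2)) := by
  have h1 : (gaussianReal 0 1).map (σ * ·) = gaussianReal 0 (Real.toNNReal (σ^2)) := by
    rw [gaussianReal_map_const_mul, mul_zero]
    congr 1
    ext
    simp [Real.coe_toNNReal _ (sq_nonneg σ)]
  have h2 : (fun x : ℝ => σ * x + m) = (· + m) ∘ (σ * ·) := rfl
  rw [h2, ← Measure.map_map (by fun_prop) (by fun_prop), h1, gaussianReal_map_add_const,
    zero_add]

lemma tail_Ioi {σ : ℝ} (hσ : 0 < σ) (m s : ℝ) :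
    gaussianReal m (Real.toNNReal (σ^2)) (Set.Ioi (m + σ * s)) ≤ gaussianReal 0 1 (Set.Ici s) := by
  rw [← gauss_map hσ m, Measure.map_apply (by fun_prop) measurableSet_Ioi]
  have : (fun x : ℝ => σ * x + m) ⁻¹' Set.Ioi (m + σ * s) = Set.Ioi s := by
    ext x
    simp only [Set.mem_preimage, Set.mem_Ioi]
    constructor <;> intro h <;> nlinarith
  rw [this]
  exact measure_mono Set.Ioi_subset_Ici_self

lemma tail_Iio {σ : ℝ} (hσ : 0 < σ) (m s : ℝ) :
    gaussianReal m (Real.toNNReal (σ^2)) (Set.Iio (m - σ * s)) ≤ gaussianReal 0 1 (Set.Ici s) := by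
  rw [← gauss_map hσ m, Measure.map_apply (by fun_prop) measurableSet_Iio]
  have : (fun x : ℝ => σ * x + m) ⁻¹' Set.Iio (m - σ * s) = Set.Iio (-s) := by
    ext x
    simp only [Set.mem_preimage, Set.mem_Iio]
    constructor <;> intro h <;> nlinarith
  rw [this, std_symm]
  exact measure_mono Set.Ioi_subset_Ici_self

set_option maxHeartbeats 2000000 in
/-- **The one-dimensional Gaussian mechanism is `(ε, δ)`-indistinguishable.** For
`ε, δ ∈ (0,1)`, sensitivity `Δ > 0`, noise scale `σ = Δ√(2 ln(1.25/δ))/ε`, and any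
`a, b` with `|a − b| ≤ Δ`, the Gaussian measures `N(a, σ²)` and `N(b, σ²)` satisfy
`N(a,σ²)(S) ≤ e^ε N(b,σ²)(S) + δ` for every Borel set `S`. -/
theorem gaussian_mechanism_indistinguishable
    (ε δ Δ : ℝ) (hε : ε ∈ Set.Ioo (0 : ℝ) 1) (hδ : δ ∈ Set.Ioo (0 : ℝ) 1)
    (hΔ : 0 < Δ)
    (σ : ℝ) (hσ : σ = Δ * Real.sqrt (2 * Real.log (1.25 / δ)) / ε)
    (a b : ℝ) (hab : |a - b| ≤ Δ) :
    ∀ S : Set ℝ, MeasurableSet S →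
      gaussianReal a (Real.toNNReal (σ ^ 2)) S
        ≤ ENNReal.ofReal (Real.exp ε) * gaussianReal b (Real.toNNReal (σ ^ 2)) S
          + ENNReal.ofReal δ := by
  obtain ⟨hε0, hε1⟩ := hε
  obtain ⟨hδ0, hδ1⟩ := hδ
  obtain ⟨L, hLdef⟩ : ∃ L : ℝ, L = Real.log (1.25 / δ) := ⟨_, rfl⟩
  rw [← hLdef] at hσ
  have hL : (1/5 : ℝ) ≤ L := by
    rw [hLdef]
    have h1 : Real.log (1.25 : ℝ) ≤ Real.log (1.25 / δ) := by
      apply Real.log_le_log (by norm_num)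
      rw [le_div_iff₀ hδ0]
      nlinarith
    have h2 := Real.log_le_sub_one_of_pos (show (0:ℝ) < (1.25 : ℝ)⁻¹ by norm_num)
    rw [Real.log_inv] at h2
    norm_num at h2 ⊢
    linarith
  obtain ⟨K, hKdef⟩ : ∃ K : ℝ, K = Real.sqrt (2 * L) := ⟨_, rfl⟩
  rw [← hKdef] at hσ
  have hK2 : K^2 = 2 * L := by rw [hKdef]; exact Real.sq_sqrt (by linarith)
  have hK0 : 0 < K := by rw [hKdef]; exact Real.sqrt_pos.mpr (by linarith)
  have hσpos : 0 < σ := by rw [hσ]; positivity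
  have hσε : σ * ε / Δ = K := by rw [hσ]; field_simp
  have hσ2 : Δ / (2 * σ) = ε / (2 * K) := by rw [hσ]; field_simp
  obtain ⟨v, hvdef⟩ : ∃ v : NNReal, v = Real.toNNReal (σ ^ 2) := ⟨_, rfl⟩
  rw [← hvdef]
  have hv : v ≠ 0 := by
    rw [hvdef]
    simp only [ne_eq, Real.toNNReal_eq_zero, not_le]
    positivity
  have hvr : (v : ℝ) = σ^2 := by rw [hvdef]; exact Real.coe_toNNReal _ (sq_nonneg σ)
  obtain ⟨τ, hτdef⟩ : ∃ τ : ℝ, τ = K - ε / (2 * K) := ⟨_, rfl⟩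
  have hτeq : τ = σ * ε / Δ - Δ / (2 * σ) := by rw [hτdef, hσε, hσ2]
  have hexpL : Real.exp (-L) = (4/5) * δ := by
    rw [hLdef, Real.exp_neg, Real.exp_log (by positivity), inv_div]
    rw [show (1.25 : ℝ) = 5/4 by norm_num]
    ring
  -- tail bound for standard normal at τ
  have htail : gaussianReal 0 1 (Set.Ici τ) ≤ ENNReal.ofReal δ := by
    rcases le_or_gt 0 τ with hτ0 | hτ0
    · refine le_trans (tail_T1 hτ0) (ENNReal.ofReal_le_ofReal ?_)
      have hKe : K * (ε / (2 * K)) = ε / 2 := by field_simp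
      have hτ2 : τ^2 = 2*L - ε + (ε/(2*K))^2 := by
        have h : τ^2 = K^2 - 2*(K*(ε/(2*K))) + (ε/(2*K))^2 := by rw [hτdef]; ring
        rw [hKe, hK2] at h; linarith
      have h1 : -τ^2/2 ≤ 1/2 + -L := by nlinarith [sq_nonneg (ε/(2*K))]
      have h2 : Real.exp (-τ^2/2) ≤ Real.exp (1/2) * ((4/5) * δ) := by
        rw [← hexpL, ← Real.exp_add]
        exact Real.exp_le_exp.mpr h1
      have hee : Real.exp (1/2 : ℝ) * Real.exp (1/2 : ℝ) = Real.exp 1 := by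
        rw [← Real.exp_add]; norm_num
      have h3 : Real.exp (1/2 : ℝ) ≤ 5/2 := by
        nlinarith [Real.exp_one_lt_d9, Real.exp_pos (1/2 : ℝ)]
      have h4 : Real.exp (1/2) * ((4/5) * δ) ≤ (5/2) * ((4/5) * δ) :=
        mul_le_mul_of_nonneg_right h3 (by positivity)
      linarith
    · refine le_trans (tail_T2 hτ0.le) (ENNReal.ofReal_le_ofReal ?_)
      have hKu : K < ε / (2*K) := by rw [hτdef] at hτ0; linarith
      have hLsmall : L < 1/4 := by
        have h2 : K * (2*K) < ε := by
          have := (lt_div_iff₀ (by positivity : (0:ℝ) < 2*K)).mp hKu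
          linarith
        nlinarith
      have hδbig : (15/16 : ℝ) ≤ δ := by
        have h4 := Real.add_one_le_exp (-L)
        rw [hexpL] at h4
        nlinarith
      have hτb : -τ ≤ 1/(2*K) := by
        have : ε/(2*K) ≤ 1/(2*K) := by gcongr
        
        rw [hτdef]
        linarith
      have ht2 : (Real.sqrt (2*π))^2 = 2*π := Real.sq_sqrt (by positivity)
      have ht0 : 0 < Real.sqrt (2*π) := Real.sqrt_pos.mpr (by positivity)
      have hKt : (8/7 : ℝ) ≤ K * Real.sqrt (2*π) := by
        have h6 : ((8/7 : ℝ))^2 ≤ (K * Real.sqrt (2*π))^2 := by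
          rw [mul_pow, hK2, ht2]
          nlinarith [Real.pi_gt_three, hL]
        exact le_of_pow_le_pow_left₀ two_ne_zero (mul_pos hK0 ht0).le h6
      have h5 : (-τ) * (Real.sqrt (2*π))⁻¹ ≤ 7/16 := by
        calc (-τ) * (Real.sqrt (2*π))⁻¹ ≤ (1/(2*K)) * (Real.sqrt (2*π))⁻¹ :=
              mul_le_mul_of_nonneg_right hτb (by positivity)
          _ = 1/(2*(K * Real.sqrt (2*π))) := by field_simp
          _ ≤ 7/16 := by
              rw [div_le_iff₀ (by positivity)]
              nlinarith
      linarith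
  -- the bad set
  obtain ⟨c, hcdef⟩ : ∃ c : ℝ, c = a - b := ⟨_, rfl⟩
  obtain ⟨B, hBdef⟩ : ∃ B : Set ℝ, B = {x : ℝ | 2*σ^2*ε < c * (2*(x-a) + c)} := ⟨_, rfl⟩
  have hBmeas : MeasurableSet B := by
    rw [hBdef]
    apply measurableSet_lt measurable_const
    fun_prop
  -- bound on the bad set
  have hB : gaussianReal a v B ≤ ENNReal.ofReal δ := by
    rcases lt_trichotomy c 0 with hc | hc | hc
    · -- c < 0 : B = Iio
      have hσne : σ ≠ 0 := ne_of_gt hσpos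
      have hcne : c ≠ 0 := ne_of_lt hc
      have hc'ne : -c ≠ 0 := neg_ne_zero.mpr hcne
      have hc'0 : 0 < -c := by linarith
      have hc'Δ : -c ≤ Δ := by
        have := abs_le.mp hab
        rw [hcdef]
        linarith [this.1]
      obtain ⟨s, hsdef⟩ : ∃ s : ℝ, s = σ*ε/(-c) - (-c)/(2*σ) := ⟨_, rfl⟩
      have hBI : B = Set.Iio (a - σ * s) := by
        have hσs : σ * s = σ^2*ε/(-c) - (-c)/2 := by
          rw [hsdef]; field_simp
        rw [hBdef]
        ext x
        simp only [Set.mem_setOf_eq, Set.mem_Iio, hσs]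
        rw [show c * (2*(x-a) + c) = (-c) * (2*(a-x) - c) by ring]
        have hkey : (-c) * (σ^2*ε/(-c)) = σ^2*ε := by
          rw [mul_comm]; exact div_mul_cancel₀ _ hc'ne
        constructor <;> intro h <;> nlinarith
      have hsτ : τ ≤ s := by
        rw [hτeq, hsdef]
        have h1 : σ*ε/Δ ≤ σ*ε/(-c) := by
          apply div_le_div_of_nonneg_left (by positivity) hc'0 hc'Δ
        have h2 : (-c)/(2*σ) ≤ Δ/(2*σ) := by gcongr
        linarith
      calc gaussianReal a v B ≤ gaussianReal 0 1 (Set.Ici s) := by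
            rw [hBI, hvdef]; exact tail_Iio hσpos a s
        _ ≤ gaussianReal 0 1 (Set.Ici τ) := measure_mono (Set.Ici_subset_Ici.mpr hsτ)
        _ ≤ ENNReal.ofReal δ := htail
    · -- c = 0
      have hBempty : B = ∅ := by
        rw [hBdef]
        ext x
        simp only [Set.mem_setOf_eq, Set.mem_empty_iff_false, iff_false, not_lt, hc]
        nlinarith
      rw [hBempty]
      simp
    · -- c > 0 : B = Ioi
      have hσne : σ ≠ 0 := ne_of_gt hσpos
      have hcne : c ≠ 0 := ne_of_gt hc
      have hcΔ : c ≤ Δ := by rw [hcdef]; exact le_trans (le_abs_self _) hab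
      obtain ⟨s, hsdef⟩ : ∃ s : ℝ, s = σ*ε/c - c/(2*σ) := ⟨_, rfl⟩
      have hBI : B = Set.Ioi (a + σ * s) := by
        have hσs : σ * s = σ^2*ε/c - c/2 := by
          rw [hsdef]; field_simp
        rw [hBdef]
        ext x
        simp only [Set.mem_setOf_eq, Set.mem_Ioi, hσs]
        have hkey : c * (σ^2*ε/c) = σ^2*ε := by
          rw [mul_comm]; exact div_mul_cancel₀ _ hcne
        constructor <;> intro h <;> nlinarith
      have hsτ : τ ≤ s := by
        rw [hτeq, hsdef]
        have h1 : σ*ε/Δ ≤ σ*ε/c := by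
          apply div_le_div_of_nonneg_left (by positivity) hc hcΔ
        have h2 : c/(2*σ) ≤ Δ/(2*σ) := by gcongr
        linarith
      calc gaussianReal a v B ≤ gaussianReal 0 1 (Set.Ici s) := by
            rw [hBI, hvdef]; exact tail_Ioi hσpos a s
        _ ≤ gaussianReal 0 1 (Set.Ici τ) := measure_mono (Set.Ici_subset_Ici.mpr hsτ)
        _ ≤ ENNReal.ofReal δ := htail
  -- main split
  intro S hS
  have h_out : gaussianReal a v (S \ B)
      ≤ ENNReal.ofReal (Real.exp ε) * gaussianReal b v S := by
    have hptwise : ∀ x ∈ S \ B,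
        gaussianPDF a v x ≤ ENNReal.ofReal (Real.exp ε) * gaussianPDF b v x := by
      intro x hx
      have hxB : c * (2*(x-a) + c) ≤ 2*σ^2*ε := by
        have := hx.2
        rw [hBdef] at this
        simpa using not_lt.mp this
      rw [gaussianPDF, gaussianPDF, ← ENNReal.ofReal_mul (Real.exp_nonneg _)]
      apply ENNReal.ofReal_le_ofReal
      rw [gaussianPDFReal, gaussianPDFReal, hvr]
      have hexp : rexp (-(x - a)^2 / (2*σ^2)) ≤ rexp ε * rexp (-(x - b)^2 / (2*σ^2)) := by
        rw [← Real.exp_add, Real.exp_le_exp]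
        rw [hcdef] at hxB
        have hd : ((x-b)^2 - (x-a)^2) / (2*σ^2) ≤ ε := by
          rw [div_le_iff₀ (by positivity)]
          have hiden : (x-b)^2 - (x-a)^2 = (a-b)*(2*(x-a)+(a-b)) := by ring
          nlinarith [hxB]
        have e1 : -(x - a)^2 / (2*σ^2)
            = ((x-b)^2 - (x-a)^2) / (2*σ^2) + -(x - b)^2 / (2*σ^2) := by ring
        rw [e1]
        linarith
      calc (Real.sqrt (2*π*σ^2))⁻¹ * rexp (-(x - a)^2 / (2*σ^2))
          ≤ (Real.sqrt (2*π*σ^2))⁻¹ * (rexp ε * rexp (-(x - b)^2 / (2*σ^2))) :=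
            mul_le_mul_of_nonneg_left hexp (by positivity)
        _ = rexp ε * ((Real.sqrt (2*π*σ^2))⁻¹ * rexp (-(x - b)^2 / (2*σ^2))) := by ring
    calc gaussianReal a v (S \ B) = ∫⁻ x in S \ B, gaussianPDF a v x := gaussianReal_apply a hv _
      _ ≤ ∫⁻ x in S \ B, ENNReal.ofReal (Real.exp ε) * gaussianPDF b v x :=
          setLIntegral_mono ((measurable_gaussianPDF b v).const_mul _) hptwise
      _ = ENNReal.ofReal (Real.exp ε) * gaussianReal b v (S \ B) := by
          rw [lintegral_const_mul _ (measurable_gaussianPDF b v), ← gaussianReal_apply b hv]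
      _ ≤ ENNReal.ofReal (Real.exp ε) * gaussianReal b v S :=
          mul_le_mul_right (measure_mono Set.diff_subset) _
  calc gaussianReal a v S = gaussianReal a v (S ∩ B) + gaussianReal a v (S \ B) :=
        (measure_inter_add_diff S hBmeas).symm
    _ ≤ ENNReal.ofReal δ + ENNReal.ofReal (Real.exp ε) * gaussianReal b v S :=
        add_le_add (le_trans (measure_mono Set.inter_subset_right) hB) h_out
    _ = ENNReal.ofReal (Real.exp ε) * gaussianReal b v S + ENNReal.ofReal δ := add_comm _ _
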